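/- There exist ε₀ > 0 and functions μ₁, …, μ_p : [0, ε₀) → ℝ with μ_ℓ(0) = λ_ℓ for each ℓ and such that for every ε ∈ [0, ε₀) the characteristic polynomial of A(ε) equals ∏_{ℓ=1}^p (X − μ_ℓ(ε)) (i.e., μ₁(ε), …, μ_p(ε) are the eigenvalues of A(ε) with multiplicity), and for every pair (j,k) with j ≤ r < k ≤ p, as ε → 0⁺, μⱼ(ε)/(μⱼ(ε) + μₖ(ε)) = ρ_{jk} + ε η_{jk}(dⱼ − dₖ) + o(ε). (This is the PCA part of Theorem 3(a): the first-order perturbation of the relative eigenvalue ratio ρ_{jk}.) -/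

import Mathlib

open Matrix Asymptotics Filter Topology

lemma my_det_diagonal_add_vecMulVec {p : ℕ} (d a b : Fin p → ℝ) :
    (Matrix.diagonal d + Matrix.vecMulVec a b).det
      = ∏ i, d i + ∑ i, a i * b i * ∏ n ∈ Finset.univ.erase i, d n := by
  classical
  set g : Fin p → Bool → (Fin p → ℝ) :=
    fun i s => if s then a i • b else d i • (Pi.single i 1 : Fin p → ℝ) with hg
  have hM : (Matrix.diagonal d + Matrix.vecMulVec a b)
      = Matrix.of fun i => ∑ s : Bool, g i s := by
    ext i j
    by_cases h : i = j <;>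
      simp [hg, Matrix.diagonal_apply, Matrix.vecMulVec_apply, Pi.single_apply, h, add_comm]
  set f := (Matrix.detRowAlternating : (Fin p → ℝ) [⋀^Fin p]→ₗ[ℝ] ℝ) with hf
  have hdet : (Matrix.diagonal d + Matrix.vecMulVec a b).det
      = ∑ r : Fin p → Bool, f (fun i => g i (r i)) := by
    rw [show (Matrix.diagonal d + Matrix.vecMulVec a b).det
        = f.toMultilinearMap (fun i => ∑ s : Bool, g i s) by rw [hM]; rfl]
    exact f.toMultilinearMap.map_sum g
  -- per-term: pull out scalars
  have hterm : ∀ r : Fin p → Bool, f (fun i => g i (r i))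
      = (∏ i, if r i then a i else d i) *
        Matrix.det (Matrix.of fun i => if r i then b else (Pi.single i 1 : Fin p → ℝ)) := by
    intro r
    have h1 : (fun i => g i (r i))
        = fun i => (if r i then a i else d i) •
            (if r i then b else (Pi.single i 1 : Fin p → ℝ)) := by
      funext i; cases hri : r i <;> simp [hg, hri]
    rw [h1]
    have := f.toMultilinearMap.map_smul_univ (fun i => if r i then a i else d i)
      (fun i => if r i then b else (Pi.single i 1 : Fin p → ℝ))
    exact this.trans rfl
  -- good set
  set ind : Fin p → (Fin p → Bool) := fun i₀ => fun i => decide (i = i₀) with hind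
  set good : Finset (Fin p → Bool) :=
    insert (fun _ => false) (Finset.univ.image ind) with hgood
  have hvanish : ∀ r ∈ Finset.univ, r ∉ good → f (fun i => g i (r i)) = 0 := by
    intro r _ hr
    simp only [hgood, Finset.mem_insert, Finset.mem_image, Finset.mem_univ, true_and,
      not_or, not_exists] at hr
    obtain ⟨hr0, hr1⟩ := hr
    obtain ⟨i₁, hi₁⟩ : ∃ i, r i = true := by
      by_contra h
      push_neg at h
      exact hr0 (funext fun i => by simpa using h i)
    obtain ⟨i₂, hi₂⟩ : ∃ i, r i ≠ ind i₁ i := by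
      by_contra h
      push_neg at h
      exact hr1 i₁ (funext fun i => (h i).symm)
    have hne : i₂ ≠ i₁ := by
      rintro rfl
      simp [hind, hi₁] at hi₂
    have hi₂' : r i₂ = true := by
      have hfalse : ind i₁ i₂ = false := by simp [hind, hne]
      rw [hfalse] at hi₂
      exact Bool.ne_false_iff.mp hi₂
    rw [hterm]
    have : Matrix.det (Matrix.of fun i => if r i then b else (Pi.single i 1 : Fin p → ℝ)) = 0 :=
      Matrix.det_zero_of_row_eq hne (funext fun j => by simp [hi₂', hi₁])
    rw [this, mul_zero]
  have hsplit : (∑ r : Fin p → Bool, f (fun i => g i (r i)))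
      = f (fun i => g i false) + ∑ i₀, f (fun i => g i (ind i₀ i)) := by
    rw [← Finset.sum_subset (Finset.subset_univ good) hvanish]
    rw [hgood, Finset.sum_insert, Finset.sum_image]
    · intro i hi j hj hij
      have := congrFun hij i
      simpa [hind] using this
    · simp only [Finset.mem_image, Finset.mem_univ, true_and, not_exists]
      intro i₀ h
      have := congrFun h i₀
      simp [hind] at this
  -- value at const false
  have h0 : f (fun i => g i false) = ∏ i, d i := by
    rw [hterm (fun _ => false)]
    have h1 : (Matrix.of fun i => (Pi.single i 1 : Fin p → ℝ))
        = (1 : Matrix (Fin p) (Fin p) ℝ) := by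
      ext i j; simp [Matrix.one_apply, Pi.single_apply, eq_comm]
    simp [h1]
  -- value at indicators
  have h1 : ∀ i₀, f (fun i => g i (ind i₀ i))
      = (a i₀ * ∏ n ∈ Finset.univ.erase i₀, d n) * b i₀ := by
    intro i₀
    rw [hterm]
    have hc : (∏ i, if ind i₀ i then a i else d i)
        = a i₀ * ∏ n ∈ Finset.univ.erase i₀, d n := by
      rw [← Finset.mul_prod_erase Finset.univ _ (Finset.mem_univ i₀)]
      have hrest : ∀ i ∈ Finset.univ.erase i₀,
          (if ind i₀ i = true then a i else d i) = d i := by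
        intro i hi
        rw [if_neg]
        simp [hind, (Finset.mem_erase.1 hi).1]
      rw [Finset.prod_congr rfl hrest]
      congr 1
      simp [hind]
    have hm : (Matrix.of fun i => if ind i₀ i then b else (Pi.single i 1 : Fin p → ℝ))
        = (1 : Matrix (Fin p) (Fin p) ℝ).updateRow i₀ b := by
      ext i j
      by_cases h : i = i₀
      · subst h; simp [hind]
      · rw [Matrix.updateRow_ne h]
        have : ind i₀ i = false := by simp [hind, h]
        simp only [Matrix.of_apply, this, Bool.false_eq_true, if_false, Matrix.one_apply,
          Pi.single_apply]
        by_cases hij : i = j <;> simp [hij, eq_comm]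
    have hdet1 : ((1 : Matrix (Fin p) (Fin p) ℝ).updateRow i₀ b).det = b i₀ := by
      rw [← Matrix.det_transpose, ← Matrix.updateCol_transpose, Matrix.transpose_one,
        ← Matrix.cramer_apply, Matrix.cramer_one]
      rfl
    rw [hc, hm, hdet1]
  rw [hdet, hsplit, h0]
  congr 1
  rw [Finset.sum_congr rfl fun i₀ _ => h1 i₀]
  exact Finset.sum_congr rfl fun i _ => by ring

noncomputable def Ffun {p : ℕ} (lam v : Fin p → ℝ) : ℝ × ℝ → ℝ := fun q =>
  ∏ m, (q.2 - (1 - q.1) * lam m) -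
    q.1 * ∑ m, (v m) ^ 2 * ∏ n ∈ Finset.univ.erase m, (q.2 - (1 - q.1) * lam n)

lemma contDiff_prodfun {p : ℕ} (lam : Fin p → ℝ) (s : Finset (Fin p)) :
    ContDiff ℝ ⊤ (fun q : ℝ × ℝ => ∏ n ∈ s, (q.2 - (1 - q.1) * lam n)) := by
  classical
  induction s using Finset.induction_on with
  | empty => simpa using contDiff_const
  | insert _ _ h ih =>
      simp only [Finset.prod_insert h]
      exact ((contDiff_snd.sub ((contDiff_const.sub contDiff_fst).mul contDiff_const))).mul ih

lemma contDiff_Ffun {p : ℕ} (lam v : Fin p → ℝ) : ContDiff ℝ ⊤ (Ffun lam v) := by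
  refine ContDiff.sub ?_ (contDiff_fst.mul (ContDiff.sum fun m _ => contDiff_const.mul ?_))
  · simpa using contDiff_prodfun lam Finset.univ
  · exact contDiff_prodfun lam _

lemma branch {p : ℕ} (lam v : Fin p → ℝ) (hinj : Function.Injective lam) (ℓ : Fin p) :
    ∃ ν : ℝ → ℝ, ν 0 = lam ℓ ∧ HasDerivAt ν ((v ℓ) ^ 2 - lam ℓ) 0 ∧
      ∀ᶠ ε in 𝓝 (0 : ℝ), Ffun lam v (ε, ν ε) = 0 := by
  classical
  set pt : ℝ × ℝ := (0, lam ℓ) with hpt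
  set P : ℝ := ∏ n ∈ Finset.univ.erase ℓ, (lam ℓ - lam n) with hPdef
  have hP : P ≠ 0 := by
    rw [hPdef]
    refine Finset.prod_ne_zero_iff.2 fun n hn => sub_ne_zero.2 fun h => ?_
    exact (Finset.mem_erase.1 hn).1 (hinj h).symm
  set c : ℝ := (lam ℓ - (v ℓ) ^ 2) * P with hcdef
  -- the decomposition F = φ₁ * H - ε * S
  set φ₁ : ℝ × ℝ → ℝ := fun q => q.2 - (1 - q.1) * lam ℓ with hφ₁def
  set H : ℝ × ℝ → ℝ :=
    fun q => ∏ n ∈ Finset.univ.erase ℓ, (q.2 - (1 - q.1) * lam n) with hHdef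
  set S : ℝ × ℝ → ℝ :=
    fun q => ∑ m, (v m) ^ 2 * ∏ n ∈ Finset.univ.erase m, (q.2 - (1 - q.1) * lam n) with hSdef
  have hFsplit : Ffun lam v = fun q => φ₁ q * H q - q.1 * S q := by
    funext q
    rw [Ffun, ← Finset.mul_prod_erase Finset.univ _ (Finset.mem_univ ℓ)]
  have hL1 : HasStrictFDerivAt φ₁
      (ContinuousLinearMap.snd ℝ ℝ ℝ + lam ℓ • ContinuousLinearMap.fst ℝ ℝ ℝ) pt := by
    have : φ₁ = fun q : ℝ × ℝ =>
        (ContinuousLinearMap.snd ℝ ℝ ℝ + lam ℓ • ContinuousLinearMap.fst ℝ ℝ ℝ) q + (-lam ℓ) := by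
      funext q
      simp [hφ₁def]
      ring
    rw [this]
    exact (ContinuousLinearMap.snd ℝ ℝ ℝ + lam ℓ • ContinuousLinearMap.fst ℝ ℝ ℝ).hasStrictFDerivAt.add_const _
  have hHd : HasStrictFDerivAt H (fderiv ℝ H pt) pt :=
    ((contDiff_prodfun lam _).contDiffAt).hasStrictFDerivAt (by simp)
  have hSd : HasStrictFDerivAt S (fderiv ℝ S pt) pt := by
    refine ((ContDiff.sum fun m _ => contDiff_const.mul (contDiff_prodfun lam _)).contDiffAt).hasStrictFDerivAt (by simp)
  have hφ₁pt : φ₁ pt = 0 := by simp [hφ₁def, hpt]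
  have hHpt : H pt = P := by
    rw [hHdef, hPdef]
    refine Finset.prod_congr rfl fun n _ => by simp [hpt]
  have hSpt : S pt = (v ℓ) ^ 2 * P := by
    simp only [hSdef]
    rw [Finset.sum_eq_single ℓ]
    · congr 1
    · intro m _ hm
      have hℓm : ℓ ∈ Finset.univ.erase m := Finset.mem_erase.2 ⟨fun h => hm h.symm, Finset.mem_univ _⟩
      rw [Finset.prod_eq_zero hℓm (by simp [hpt]), mul_zero]
    · intro h; exact absurd (Finset.mem_univ ℓ) h
  -- derivative of F
  set L : ℝ × ℝ →L[ℝ] ℝ :=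
    (ContinuousLinearMap.fst ℝ ℝ ℝ).smulRight c + (ContinuousLinearMap.snd ℝ ℝ ℝ).smulRight P
      with hLdef
  have hFd : HasStrictFDerivAt (Ffun lam v) L pt := by
    rw [hFsplit]
    have h1 := hL1.mul hHd
    have h2 := hasStrictFDerivAt_fst.mul hSd
    have h3 := h1.sub h2
    have hEq : φ₁ pt • fderiv ℝ H pt +
        H pt • (ContinuousLinearMap.snd ℝ ℝ ℝ + lam ℓ • ContinuousLinearMap.fst ℝ ℝ ℝ) -
        (pt.1 • fderiv ℝ S pt + S pt • ContinuousLinearMap.fst ℝ ℝ ℝ) = L := by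
      rw [hφ₁pt, hHpt, hSpt, show pt.1 = 0 by rw [hpt]]
      refine ContinuousLinearMap.ext fun q => ?_
      simp [hLdef, hcdef]
      ring
    exact hEq ▸ h3
  -- the local inverse of G = (ε, F)
  set fwd : ℝ × ℝ →L[ℝ] ℝ × ℝ := (ContinuousLinearMap.fst ℝ ℝ ℝ).prod L with hfwd
  set bwd : ℝ × ℝ →L[ℝ] ℝ × ℝ :=
    (ContinuousLinearMap.fst ℝ ℝ ℝ).prod
      ((ContinuousLinearMap.fst ℝ ℝ ℝ).smulRight (-(c / P)) +
        (ContinuousLinearMap.snd ℝ ℝ ℝ).smulRight P⁻¹) with hbwd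
  have hleft : Function.LeftInverse bwd fwd := by
    intro q
    apply Prod.ext
    · simp [hfwd, hbwd]
    · simp [hfwd, hbwd, hLdef]
      field_simp
      ring
  have hright : Function.RightInverse bwd fwd := by
    intro q
    apply Prod.ext
    · simp [hfwd, hbwd]
    · simp [hfwd, hbwd, hLdef]
      field_simp
      ring
  set e : (ℝ × ℝ) ≃L[ℝ] (ℝ × ℝ) := ContinuousLinearEquiv.equivOfInverse fwd bwd hleft hright
    with hedef
  set G : ℝ × ℝ → ℝ × ℝ := fun q => (q.1, Ffun lam v q) with hGdef
  have hGd : HasStrictFDerivAt G (e : (ℝ × ℝ) →L[ℝ] (ℝ × ℝ)) pt := by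
    have := HasStrictFDerivAt.prodMk (hasStrictFDerivAt_fst (𝕜 := ℝ) (p := pt)) hFd
    have hcoe : (e : (ℝ × ℝ) →L[ℝ] (ℝ × ℝ)) = fwd := rfl
    rw [hcoe, hfwd]
    exact this
  have hGpt : G pt = (0, 0) := by
    have hF0 : Ffun lam v pt = 0 := by
      rw [Ffun]
      have : (∏ m, (pt.2 - (1 - pt.1) * lam m)) = 0 :=
        Finset.prod_eq_zero (Finset.mem_univ ℓ) (by simp [hpt])
      rw [this, show pt.1 = 0 by rw [hpt]]
      ring
    rw [hGdef]
    simp only [hF0]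
    simp [hpt]
  set g : ℝ × ℝ → ℝ × ℝ := hGd.localInverse G _ pt with hgdef
  refine ⟨fun ε => (g (ε, 0)).2, ?_, ?_, ?_⟩
  · have h0 : g (0, 0) = pt := by
      rw [show ((0 : ℝ), (0 : ℝ)) = G pt from hGpt.symm]
      exact hGd.localInverse_apply_image
    show (g ((0 : ℝ), (0 : ℝ))).2 = lam ℓ
    rw [h0, hpt]
  · -- derivative
    have hginv : HasStrictFDerivAt g
        ((e.symm : (ℝ × ℝ) →L[ℝ] (ℝ × ℝ))) (G pt) := hGd.to_localInverse
    rw [hGpt] at hginv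
    have hins : HasStrictFDerivAt (fun ε : ℝ => ((ε, 0) : ℝ × ℝ))
        (ContinuousLinearMap.inl ℝ ℝ ℝ) 0 :=
      (ContinuousLinearMap.inl ℝ ℝ ℝ).hasStrictFDerivAt
    have hcomp : HasStrictFDerivAt (fun ε : ℝ => g (ε, 0))
        (((e.symm : (ℝ × ℝ) →L[ℝ] (ℝ × ℝ))).comp (ContinuousLinearMap.inl ℝ ℝ ℝ)) 0 :=
      HasStrictFDerivAt.comp (f := fun ε : ℝ => ((ε, 0) : ℝ × ℝ)) (0 : ℝ) hginv hins
    have hsnd : HasStrictFDerivAt (fun ε : ℝ => (g (ε, 0)).2)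
        ((ContinuousLinearMap.snd ℝ ℝ ℝ).comp
          (((e.symm : (ℝ × ℝ) →L[ℝ] (ℝ × ℝ))).comp (ContinuousLinearMap.inl ℝ ℝ ℝ))) 0 :=
      (ContinuousLinearMap.snd ℝ ℝ ℝ).hasStrictFDerivAt.comp (0 : ℝ) hcomp
    have hval : ((ContinuousLinearMap.snd ℝ ℝ ℝ).comp
        (((e.symm : (ℝ × ℝ) →L[ℝ] (ℝ × ℝ))).comp (ContinuousLinearMap.inl ℝ ℝ ℝ))) 1
        = (v ℓ) ^ 2 - lam ℓ := by
      have h1 : (ContinuousLinearMap.inl ℝ ℝ ℝ) (1 : ℝ) = ((1 : ℝ), (0 : ℝ)) := rfl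
      have h2 : e.symm ((1 : ℝ), (0 : ℝ)) = bwd ((1 : ℝ), (0 : ℝ)) := by
        rw [hedef, ContinuousLinearEquiv.symm_equivOfInverse,
          ContinuousLinearEquiv.equivOfInverse_apply]
      have h3 : bwd ((1 : ℝ), (0 : ℝ)) = ((1 : ℝ), -(c / P)) := by
        rw [hbwd]
        simp only [ContinuousLinearMap.prod_apply, ContinuousLinearMap.add_apply,
          ContinuousLinearMap.smulRight_apply, ContinuousLinearMap.coe_fst',
          ContinuousLinearMap.coe_snd']
        norm_num
      rw [ContinuousLinearMap.comp_apply, ContinuousLinearMap.comp_apply, h1,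
        ContinuousLinearEquiv.coe_coe, h2, h3]
      show -(c / P) = (v ℓ) ^ 2 - lam ℓ
      rw [hcdef]
      field_simp
      ring
    have := hsnd.hasStrictDerivAt
    rw [hval] at this
    exact this.hasDerivAt
  · -- eventually a root
    have hev : ∀ᶠ y in 𝓝 (G pt), G (g y) = y := hGd.eventually_right_inverse
    rw [hGpt] at hev
    have htend : Filter.Tendsto (fun ε : ℝ => ((ε, 0) : ℝ × ℝ)) (𝓝 0) (𝓝 (0, 0)) :=
      (continuous_id.prodMk continuous_const).tendsto' _ _ (by simp)
    filter_upwards [htend.eventually hev] with ε hε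
    have h1 : (g (ε, 0)).1 = ε := congrArg Prod.fst hε
    have h2 : Ffun lam v (g (ε, 0)) = 0 := by
      have := congrArg Prod.snd hε
      simpa [hGdef] using this
    have : g (ε, 0) = (ε, (g (ε, 0)).2) := Prod.ext h1 rfl
    rw [this] at h2
    exact h2

lemma my_eval_charpoly {p : ℕ} (M : Matrix (Fin p) (Fin p) ℝ) (t : ℝ) :
    M.charpoly.eval t = (t • (1 : Matrix (Fin p) (Fin p) ℝ) - M).det := by
  rw [Matrix.charpoly]
  rw [show Polynomial.eval t (Matrix.charmatrix M).det
      = (Polynomial.evalRingHom t) (Matrix.charmatrix M).det from rfl]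
  rw [RingHom.map_det]
  congr 1
  ext i j
  by_cases h : i = j <;>
    simp [Matrix.charmatrix_apply, Matrix.diagonal_apply, h, Matrix.one_apply,
      Matrix.smul_apply, Matrix.sub_apply, Matrix.map_apply]

lemma charpoly_eval_eq_Ffun {p : ℕ}
    (lam : Fin p → ℝ) (γ : Fin p → Fin p → ℝ)
    (horth : ∀ i j, γ i ⬝ᵥ γ j = if i = j then (1 : ℝ) else 0)
    (Sig : Matrix (Fin p) (Fin p) ℝ)
    (hSig : Sig = ∑ ℓ, lam ℓ • vecMulVec (γ ℓ) (γ ℓ))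
    (x : Fin p → ℝ) (ε t : ℝ) :
    ((1 - ε) • Sig + ε • vecMulVec x x).charpoly.eval t
      = Ffun lam (fun m => γ m ⬝ᵥ x) (ε, t) := by
  classical
  set v : Fin p → ℝ := fun m => γ m ⬝ᵥ x with hv
  set Q : Matrix (Fin p) (Fin p) ℝ := Matrix.of γ with hQ
  have hQQ : Q * Qᵀ = 1 := by
    ext i j
    simp only [Matrix.mul_apply, Matrix.transpose_apply, hQ, Matrix.of_apply, Matrix.one_apply]
    rw [show ∑ k, γ i k * γ j k = γ i ⬝ᵥ γ j from rfl, horth i j]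
  -- conjugation of a vecMulVec
  have hconjv : ∀ u w : Fin p → ℝ,
      Q * Matrix.vecMulVec u w * Qᵀ = Matrix.vecMulVec (Q *ᵥ u) (Q *ᵥ w) := by
    intro u w
    ext m n
    simp only [Matrix.mul_apply, Matrix.vecMulVec_apply, Matrix.transpose_apply,
      Matrix.mulVec, dotProduct]
    rw [Finset.sum_mul_sum]
    rw [Finset.sum_comm]
    refine Finset.sum_congr rfl fun c _ => ?_
    rw [Finset.sum_mul]
    refine Finset.sum_congr rfl fun a _ => by ring
  have hQmulγ : ∀ ℓ, Q *ᵥ γ ℓ = Pi.single ℓ 1 := by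
    intro ℓ
    funext m
    rw [show (Q *ᵥ γ ℓ) m = γ m ⬝ᵥ γ ℓ from rfl, horth m ℓ]
    simp [Pi.single_apply]
  have hQx : Q *ᵥ x = v := rfl
  have hQSig : Q * Sig * Qᵀ = Matrix.diagonal lam := by
    rw [hSig, Matrix.mul_sum, Matrix.sum_mul]
    rw [Finset.sum_congr rfl fun ℓ _ => by
      rw [Matrix.mul_smul, Matrix.smul_mul, hconjv, hQmulγ]]
    ext m n
    simp only [Matrix.sum_apply, Matrix.smul_apply, Matrix.vecMulVec_apply, Pi.single_apply,
      smul_eq_mul, Matrix.diagonal_apply]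
    by_cases h : m = n
    · subst h
      rw [Finset.sum_eq_single m]
      · simp
      · intro b _ hb
        simp [Ne.symm hb]
      · intro hm
        exact absurd (Finset.mem_univ m) hm
    · rw [if_neg h, Finset.sum_eq_zero]
      intro i _
      by_cases him : m = i
      · subst him
        simp [Ne.symm h]
      · simp [him]
  set A : Matrix (Fin p) (Fin p) ℝ := (1 - ε) • Sig + ε • vecMulVec x x with hA
  have hconj : Q * (t • (1 : Matrix (Fin p) (Fin p) ℝ) - A) * Qᵀ
      = Matrix.diagonal (fun m => t - (1 - ε) * lam m)
        + Matrix.vecMulVec (fun m => -ε * v m) v := by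
    rw [hA]
    have hexp : Q * (t • (1 : Matrix (Fin p) (Fin p) ℝ)
          - ((1 - ε) • Sig + ε • vecMulVec x x)) * Qᵀ
        = t • (1 : Matrix (Fin p) (Fin p) ℝ)
          - ((1 - ε) • Matrix.diagonal lam + ε • vecMulVec v v) := by
      simp only [Matrix.mul_sub, Matrix.sub_mul, Matrix.mul_add, Matrix.add_mul,
        Matrix.mul_smul, Matrix.smul_mul, Matrix.mul_one, hQQ, hQSig, hconjv x x, hQx]
    rw [hexp]
    ext m n
    simp only [Matrix.sub_apply, Matrix.add_apply, Matrix.smul_apply, Matrix.diagonal_apply,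
      Matrix.vecMulVec_apply, Matrix.one_apply, smul_eq_mul]
    by_cases h : m = n <;> simp [h] <;> ring
  have hdetconj : (t • (1 : Matrix (Fin p) (Fin p) ℝ) - A).det
      = (Q * (t • (1 : Matrix (Fin p) (Fin p) ℝ) - A) * Qᵀ).det := by
    rw [Matrix.det_mul, Matrix.det_mul]
    rw [show Q.det * (t • (1 : Matrix (Fin p) (Fin p) ℝ) - A).det * Qᵀ.det
        = (t • (1 : Matrix (Fin p) (Fin p) ℝ) - A).det * (Q.det * Qᵀ.det) by ring]
    rw [← Matrix.det_mul, hQQ, Matrix.det_one, mul_one]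
  rw [my_eval_charpoly, hdetconj, hconj, my_det_diagonal_add_vecMulVec]
  rw [Ffun]
  simp only []
  rw [Finset.mul_sum]
  have hsum : (∑ i, -ε * v i * v i * ∏ n ∈ Finset.univ.erase i, (t - (1 - ε) * lam n))
      = -(∑ i, ε * (v i ^ 2 * ∏ n ∈ Finset.univ.erase i, (t - (1 - ε) * lam n))) := by
    rw [← Finset.sum_neg_distrib]
    exact Finset.sum_congr rfl fun m _ => by ring
  linarith [hsum]

lemma charpoly_eq_prod_of_roots {p : ℕ} (M : Matrix (Fin p) (Fin p) ℝ) (μ : Fin p → ℝ)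
    (hinj : Function.Injective μ) (hroot : ∀ ℓ, M.charpoly.eval (μ ℓ) = 0) :
    M.charpoly = ∏ ℓ, (Polynomial.X - Polynomial.C (μ ℓ)) := by
  classical
  have hq : (∏ ℓ, (Polynomial.X - Polynomial.C (μ ℓ))).Monic :=
    Polynomial.monic_prod_of_monic _ _ fun ℓ _ => Polynomial.monic_X_sub_C _
  have hdvd : (∏ ℓ, (Polynomial.X - Polynomial.C (μ ℓ))) ∣ M.charpoly := by
    refine Finset.prod_dvd_of_coprime ?_ fun ℓ _ => ?_
    · exact (Polynomial.pairwise_coprime_X_sub_C hinj).set_pairwise _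
    · exact Polynomial.dvd_iff_isRoot.2 (hroot ℓ)
  refine Polynomial.eq_of_monic_of_dvd_of_natDegree_le hq M.charpoly_monic hdvd ?_
  rw [M.charpoly_natDegree_eq_dim]
  rw [Polynomial.natDegree_prod _ _ (fun ℓ _ => Polynomial.X_sub_C_ne_zero _)]
  simp

theorem stmt6 (p r : ℕ) (hr : 1 ≤ r) (hrp : r < p)
    (lam : Fin p → ℝ) (γ : Fin p → Fin p → ℝ)
    (hpos : ∀ ℓ, 0 < lam ℓ) (hanti : StrictAnti lam)
    (horth : ∀ i j, γ i ⬝ᵥ γ j = if i = j then (1 : ℝ) else 0)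
    (Sig : Matrix (Fin p) (Fin p) ℝ)
    (hSig : Sig = ∑ ℓ, lam ℓ • vecMulVec (γ ℓ) (γ ℓ))
    (x : Fin p → ℝ) :
    ∃ ε₀ > (0 : ℝ), ∃ μ : Fin p → ℝ → ℝ,
      (∀ ℓ, μ ℓ 0 = lam ℓ) ∧
      (∀ ε ∈ Set.Ico (0 : ℝ) ε₀,
        ((1 - ε) • Sig + ε • vecMulVec x x).charpoly
          = ∏ ℓ, (Polynomial.X - Polynomial.C (μ ℓ ε))) ∧
      ∀ j k : Fin p, (j : ℕ) < r → r ≤ (k : ℕ) →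
        (fun ε : ℝ => μ j ε / (μ j ε + μ k ε) -
            (lam j / (lam j + lam k) +
              ε * (lam j / (lam j + lam k) * (1 - lam j / (lam j + lam k))) *
                ((γ j ⬝ᵥ x) ^ 2 / lam j - (γ k ⬝ᵥ x) ^ 2 / lam k)))
          =o[𝓝[>] (0 : ℝ)] fun ε => ε := by
  classical
  set v : Fin p → ℝ := fun m => γ m ⬝ᵥ x with hv
  have hinj : Function.Injective lam := hanti.injective
  choose ν hν0 hνd hνroot using fun ℓ => branch lam v hinj ℓ
  have hνc : ∀ ℓ, ContinuousAt (ν ℓ) 0 := fun ℓ => (hνd ℓ).continuousAt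
  have hsep : ∀ᶠ ε in 𝓝 (0 : ℝ),
      ∀ pr : Fin p × Fin p, pr.1 ≠ pr.2 → ν pr.1 ε ≠ ν pr.2 ε := by
    rw [eventually_all]
    intro pr
    by_cases hp12 : pr.1 = pr.2
    · exact Filter.Eventually.of_forall fun ε h => absurd hp12 h
    · have h1 : Tendsto (fun ε => ν pr.1 ε - ν pr.2 ε) (𝓝 0)
          (𝓝 (lam pr.1 - lam pr.2)) := by
        have := (hνc pr.1).sub (hνc pr.2)
        rw [ContinuousAt, Pi.sub_apply, hν0 pr.1, hν0 pr.2] at this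
        exact this
      have h2 : lam pr.1 - lam pr.2 ≠ 0 := sub_ne_zero.2 fun h => hp12 (hinj h)
      filter_upwards [h1.eventually_ne h2] with ε hε _
      exact sub_ne_zero.1 hε
  have hroots : ∀ᶠ ε in 𝓝 (0 : ℝ), ∀ ℓ, Ffun lam v (ε, ν ℓ ε) = 0 :=
    eventually_all.2 hνroot
  obtain ⟨ε₀, hε₀pos, hball⟩ : ∃ δ > (0 : ℝ), ∀ ε : ℝ, |ε| < δ →
      ((∀ ℓ, Ffun lam v (ε, ν ℓ ε) = 0) ∧
        ∀ pr : Fin p × Fin p, pr.1 ≠ pr.2 → ν pr.1 ε ≠ ν pr.2 ε) := by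
    have h := hroots.and hsep
    rw [Metric.eventually_nhds_iff] at h
    obtain ⟨δ, hδ, hh⟩ := h
    exact ⟨δ, hδ, fun ε hε => hh (by simpa [Real.dist_eq] using hε)⟩
  refine ⟨ε₀, hε₀pos, ν, hν0, ?_, ?_⟩
  · intro ε hε
    obtain ⟨hε0, hεlt⟩ := hε
    obtain ⟨h1, h2⟩ := hball ε (by rw [abs_of_nonneg hε0]; exact hεlt)
    refine charpoly_eq_prod_of_roots _ _ ?_ ?_
    · intro a b hab
      by_contra hne
      exact (h2 (a, b) hne) hab
    · intro ℓ
      rw [charpoly_eval_eq_Ffun lam γ horth Sig hSig x ε (ν ℓ ε)]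
      exact h1 ℓ
  · intro j k _ _
    have hden : ν j 0 + ν k 0 ≠ 0 := by
      rw [hν0, hν0]
      have := hpos j
      have := hpos k
      linarith
    have hdiv := (hνd j).div ((hνd j).add (hνd k)) hden
    rw [hasDerivAt_iff_isLittleO] at hdiv
    have hmono := hdiv.mono (nhdsWithin_le_nhds :
      𝓝[>] (0 : ℝ) ≤ 𝓝 0)
    refine hmono.congr' (Filter.Eventually.of_forall fun ε => ?_)
      (Filter.Eventually.of_forall fun ε => sub_zero ε)
    -- pointwise equality of the two functions
    simp only [sub_zero, smul_eq_mul, Pi.add_apply, Pi.div_apply]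
    rw [hν0 j, hν0 k]
    have hlj := (hpos j).ne'
    have hlk := (hpos k).ne'
    have hljk : lam j + lam k ≠ 0 := by
      have := hpos j
      have := hpos k
      linarith
    have hD : ((v j ^ 2 - lam j) * (lam j + lam k)
          - lam j * ((v j ^ 2 - lam j) + (v k ^ 2 - lam k))) / (lam j + lam k) ^ 2
        = lam j / (lam j + lam k) * (1 - lam j / (lam j + lam k))
            * (v j ^ 2 / lam j - v k ^ 2 / lam k) := by
      field_simp
      ring
    rw [hD]
    ring
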